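/- arXiv:1104.5646 — 2 statements merged into one kernel-verified Lean document; each statement's English description precedes it below -/
import Mathlib

section
/- Let ρ be a representation of the cyclic quiver G_{2m} in which all the maps α_i and β_i are bijective, and let T : V_1 → V_1 be the associated monodromy. Then dim ker M_ρ = dim ker(T − id_{V_1}) and dim coker M_ρ = dim ker(T − id_{V_1}). -/
open Module
open Fin.NatCast

/-- A representation of the cyclic quiver `G_{2m}`: `W i` is the odd vertex space `V_{2i+1}`
(0-based, so `W 0 = V_1`), `U i` is the even vertex space `V_{2i+2}`,
`α i : V_{2i+1} → V_{2i+2}` and `β i : V_{2i+3} → V_{2i+2}` (indices of vertices mod `2m`). -/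
structure QRep (κ : Type) [Field κ] (m : ℕ) [NeZero m] where
  W : Fin m → Type
  U : Fin m → Type
  [accW : ∀ i, AddCommGroup (W i)]
  [accU : ∀ i, AddCommGroup (U i)]
  [modW : ∀ i, Module κ (W i)]
  [modU : ∀ i, Module κ (U i)]
  [fdW : ∀ i, FiniteDimensional κ (W i)]
  [fdU : ∀ i, FiniteDimensional κ (U i)]
  α : ∀ i, W i →ₗ[κ] U i
  β : ∀ i, W (i + 1) →ₗ[κ] U i

attribute [instance] QRep.accW QRep.accU QRep.modW QRep.modU QRep.fdW QRep.fdU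

namespace QRep

variable {κ : Type} [Field κ] {m : ℕ} [NeZero m]

/-- The block matrix `M_ρ : ⊕ V_{2i-1} → ⊕ V_{2i}`,
`M_ρ(v₁, v₃, …) = (α₁v₁ − β₁v₃, α₂v₃ − β₂v₅, …, α_m v_{2m−1} − β_m v₁)`. -/
def blockMap (ρ : QRep κ m) : (∀ i, ρ.W i) →ₗ[κ] ∀ i, ρ.U i :=
  LinearMap.pi fun i => (ρ.α i).comp (LinearMap.proj i) - (ρ.β i).comp (LinearMap.proj (i + 1))

/-- Direct sum of two representations. -/
def dsum (ρ σ : QRep κ m) : QRep κ m where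
  W i := ρ.W i × σ.W i
  U i := ρ.U i × σ.U i
  α i := (ρ.α i).prodMap (σ.α i)
  β i := (ρ.β i).prodMap (σ.β i)

/-- Direct sum of a finite family of representations. -/
def dsumFin {N : ℕ} (f : Fin N → QRep κ m) : QRep κ m where
  W i := ∀ j, (f j).W i
  U i := ∀ j, (f j).U i
  α i := LinearMap.pi fun j => ((f j).α i).comp (LinearMap.proj j)
  β i := LinearMap.pi fun j => ((f j).β i).comp (LinearMap.proj j)

/-- An isomorphism of representations. -/
structure Iso (ρ σ : QRep κ m) where
  φW : ∀ i, ρ.W i ≃ₗ[κ] σ.W i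
  φU : ∀ i, ρ.U i ≃ₗ[κ] σ.U i
  commα : ∀ i x, φU i (ρ.α i x) = σ.α i (φW i x)
  commβ : ∀ i x, φU i (ρ.β i x) = σ.β i (φW (i + 1) x)

def IsIsomorphic (ρ σ : QRep κ m) : Prop := Nonempty (Iso ρ σ)

/-- A representation is nontrivial if some vertex space is nonzero. -/
def NontrivialRep (ρ : QRep κ m) : Prop :=
  (∃ i, Nontrivial (ρ.W i)) ∨ (∃ i, Nontrivial (ρ.U i))

/-- A representation is indecomposable if it is nontrivial and not isomorphic to a direct
sum of two nontrivial representations. -/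
def Indecomposable (ρ : QRep κ m) : Prop :=
  ρ.NontrivialRep ∧ ∀ σ τ : QRep κ m, σ.NontrivialRep → τ.NontrivialRep →
    ¬ ρ.IsIsomorphic (σ.dsum τ)

end QRep

namespace QRep

variable {κ : Type} [Field κ] {m : ℕ} [NeZero m]

/-- Transport of an odd vertex space along an equality of indices (linear map version). -/
def castW (ρ : QRep κ m) {a b : Fin m} (h : a = b) : ρ.W a →ₗ[κ] ρ.W b := by
  subst h; exact LinearMap.id

/-- Transport of an odd vertex space along an equality of indices (equiv version). -/
def castWE (ρ : QRep κ m) {a b : Fin m} (h : a = b) : ρ.W a ≃ₗ[κ] ρ.W b := by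
  subst h; exact LinearEquiv.refl κ _

/-- Iterated composite of the maps `g i : W i → W (i+1)`, `n` steps starting at vertex `i`. -/
def cyclicComp (ρ : QRep κ m) (g : ∀ i, ρ.W i →ₗ[κ] ρ.W (i + 1)) :
    (n : ℕ) → ∀ i : Fin m, ρ.W i →ₗ[κ] ρ.W (i + (n : Fin m))
  | 0, i => ρ.castW (by simp)
  | n + 1, i =>
      (ρ.castW (show i + (n : Fin m) + 1 = i + ((n + 1 : ℕ) : Fin m) by push_cast; rw [add_assoc])).comp
        ((g (i + (n : Fin m))).comp (cyclicComp ρ g n i))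

/-- The monodromy `T = β_m⁻¹ ∘ α_m ∘ ⋯ ∘ β_1⁻¹ ∘ α_1 : V_1 → V_1`, where
`g i = β i⁻¹ ∘ α i` is given as data. -/
def monodromy (ρ : QRep κ m) (g : ∀ i, ρ.W i →ₗ[κ] ρ.W (i + 1)) : ρ.W 0 →ₗ[κ] ρ.W 0 :=
  (ρ.castW (show (0 : Fin m) + (m : Fin m) = 0 by simp [Fin.natCast_self])).comp
    (cyclicComp ρ g m 0)

/-- Iterated composite of the equivalences `e i : W i ≃ W (i+1)`, `n` steps starting at `i`. -/
def cyclicCompE (ρ : QRep κ m) (e : ∀ i, ρ.W i ≃ₗ[κ] ρ.W (i + 1)) :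
    (n : ℕ) → ∀ i : Fin m, ρ.W i ≃ₗ[κ] ρ.W (i + (n : Fin m))
  | 0, i => ρ.castWE (by simp)
  | n + 1, i =>
      ((cyclicCompE ρ e n i).trans (e (i + (n : Fin m)))).trans
        (ρ.castWE (show i + (n : Fin m) + 1 = i + ((n + 1 : ℕ) : Fin m) by push_cast; rw [add_assoc]))

/-- `T_i`, the monodromy based at the odd vertex `V_{2i+1}` (so `Ti e 0` is `T_m = T`). -/
def Ti (ρ : QRep κ m) (e : ∀ i, ρ.W i ≃ₗ[κ] ρ.W (i + 1)) (i : Fin m) : ρ.W i ≃ₗ[κ] ρ.W i :=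
  (cyclicCompE ρ e m i).trans (ρ.castWE (show i + (m : Fin m) = i by simp [Fin.natCast_self]))

/-- `C_i = g_i ∘ ⋯ ∘ g_1 : V_1 → V_{2i+1}`. -/
def Ci (ρ : QRep κ m) (e : ∀ i, ρ.W i ≃ₗ[κ] ρ.W (i + 1)) (i : Fin m) : ρ.W 0 ≃ₗ[κ] ρ.W i :=
  (cyclicCompE ρ e (i : ℕ) 0).trans
    (ρ.castWE (show (0 : Fin m) + ((i : ℕ) : Fin m) = i by simp [Fin.cast_val_eq_self]))

end QRep

/-- Index set of the basis vectors `e_l`, `p ≤ l ≤ q`, `l ≡ j (mod 2m)`,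
of a vertex space of the string representation `ρ(p,q)`. -/
noncomputable def strIdx (m : ℕ) (p q : ℤ) (j : ZMod (2 * m)) : Finset ℤ :=
  (Finset.Icc p q).filter fun l => ((l : ZMod (2 * m)) = j)

/-- The linear map sending the basis vector `e_l` (`l ∈ T`) to the coordinate `l + d` (if present):
in matrix terms, the map whose `(l', l)` entry is `1` iff `l' + d = l`. -/
def eMap (κ : Type) [Field κ] (S T : Finset ℤ) (d : ℤ) : (S → κ) →ₗ[κ] T → κ where
  toFun f l := if h : ((l : ℤ) + d) ∈ S then f ⟨(l : ℤ) + d, h⟩ else 0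
  map_add' f g := by
    funext l
    by_cases h : ((l : ℤ) + d) ∈ S <;> simp [h]
  map_smul' c f := by
    funext l
    by_cases h : ((l : ℤ) + d) ∈ S <;> simp [h]

/-- The string representation `ρ(p,q)`: the vertex space at vertex `j` has basis
`{e_l : p ≤ l ≤ q, l ≡ j (mod 2m)}`, `α` sends `e_l` to `e_{l+1}` if `l+1 ≤ q` (else `0`),
and `β` sends `e_l` to `e_{l−1}` if `l−1 ≥ p` (else `0`). -/
noncomputable def strRep (κ : Type) [Field κ] (m : ℕ) [NeZero m] (p q : ℤ) : QRep κ m where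
  W i := strIdx m p q ((2 * (i : ℕ) + 1 : ℕ)) → κ
  U i := strIdx m p q ((2 * (i : ℕ) + 2 : ℕ)) → κ
  α _ := eMap κ _ _ (-1)
  β _ := eMap κ _ _ 1

/-- The `k × k` Jordan block `J(λ,k)`: `λ` on the diagonal, `1` on the superdiagonal. -/
def jordanMatrix (κ : Type) [Field κ] (lam : κ) (k : ℕ) : Matrix (Fin k) (Fin k) κ :=
  Matrix.of fun a b => if b = a then lam else if (b : ℕ) = (a : ℕ) + 1 then (1 : κ) else 0

/-- The Jordan-cell representation `ρ^J(λ,k)`: every vertex space is `κ^k`, `α_1 = J(λ,k)`,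
and all other maps are the identity. -/
def jordanRep (κ : Type) [Field κ] (m : ℕ) [NeZero m] (lam : κ) (k : ℕ) : QRep κ m where
  W _ := Fin k → κ
  U _ := Fin k → κ
  α i := if i = 0 then (jordanMatrix κ lam k).mulVecLin else LinearMap.id
  β _ := LinearMap.id

namespace QRep

section Aux

variable {κ : Type} [Field κ] {m : ℕ} [NeZero m] (ρ : QRep κ m)

lemma castW_heq {a b : Fin m} (h : a = b) (x : ρ.W a) : HEq (ρ.castW h x) x := by
  subst h; rfl

lemma apply_castW (v : ∀ i, ρ.W i) {a b : Fin m} (h : a = b) :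
    v b = ρ.castW h (v a) := by subst h; rfl

lemma g_castW (g : ∀ i, ρ.W i →ₗ[κ] ρ.W (i + 1)) {a b : Fin m} (h : a = b) (x : ρ.W a) :
    g b (ρ.castW h x) = ρ.castW (by rw [h]) (g a x) := by subst h; rfl

lemma cyclicComp_congr (g : ∀ i, ρ.W i →ₗ[κ] ρ.W (i + 1)) {n n' : ℕ} (h : n = n')
    (i : Fin m) (x : ρ.W i) :
    HEq (ρ.cyclicComp g n i x) (ρ.cyclicComp g n' i x) := by subst h; rfl

lemma mem_ker_blockMap_iff (hβ : ∀ i, Function.Bijective (ρ.β i))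
    (g : ∀ i, ρ.W i →ₗ[κ] ρ.W (i + 1)) (hg : ∀ i x, ρ.β i (g i x) = ρ.α i x)
    (v : ∀ i, ρ.W i) :
    v ∈ LinearMap.ker ρ.blockMap ↔ ∀ i, v (i + 1) = g i (v i) := by
  simp only [LinearMap.mem_ker, QRep.blockMap, funext_iff, LinearMap.pi_apply,
    LinearMap.sub_apply, LinearMap.comp_apply, LinearMap.proj_apply, Pi.zero_apply,
    sub_eq_zero]
  constructor
  · intro h i
    apply (hβ i).injective
    rw [hg]
    exact (h i).symm
  · intro h i
    rw [h i, hg]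

end Aux

lemma kerA {κ : Type} [Field κ] {m : ℕ} [NeZero m] (ρ : QRep κ m)
    (g : ∀ i, ρ.W i →ₗ[κ] ρ.W (i + 1)) (v : ∀ i, ρ.W i)
    (hv : ∀ i, v (i + 1) = g i (v i)) :
    ∀ (n : ℕ) (i : Fin m), v (i + (n : Fin m)) = ρ.cyclicComp g n i (v i)
  | 0, i => by
      rw [QRep.cyclicComp]
      exact ρ.apply_castW v _
  | n + 1, i => by
      rw [QRep.cyclicComp]
      simp only [LinearMap.comp_apply]
      rw [← kerA ρ g v hv n i, ← hv (i + (n : Fin m))]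
      exact ρ.apply_castW v _

end QRep

/-- If all the maps `α_i`, `β_i` of a representation `ρ` of `G_{2m}` are
bijective and `T : V_1 → V_1` is the monodromy (built from the maps `g i = β i⁻¹ ∘ α i`),
then `dim ker M_ρ = dim ker (T − id)` and `dim coker M_ρ = dim ker (T − id)`. -/
theorem blockMap_ker_coker_of_bijective {κ : Type} [Field κ] {m : ℕ} [NeZero m]
    (ρ : QRep κ m)
    (hα : ∀ i, Function.Bijective (ρ.α i)) (hβ : ∀ i, Function.Bijective (ρ.β i))
    (g : ∀ i, ρ.W i →ₗ[κ] ρ.W (i + 1)) (hg : ∀ i x, ρ.β i (g i x) = ρ.α i x) :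
    finrank κ (LinearMap.ker ρ.blockMap) =
      finrank κ (LinearMap.ker (ρ.monodromy g - LinearMap.id)) ∧
    finrank κ ((∀ i, ρ.U i) ⧸ LinearMap.range ρ.blockMap) =
      finrank κ (LinearMap.ker (ρ.monodromy g - LinearMap.id)) := by
  classical
  -- the projection from ker M to W 0
  set q : (LinearMap.ker ρ.blockMap) →ₗ[κ] ρ.W 0 :=
    (LinearMap.proj (0 : Fin m)).comp (Submodule.subtype _) with hq_def
  have hm0 : ((m : Fin m)) = 0 := by simp [Fin.natCast_self]
  have hzero : ∀ i : Fin m, (0 : Fin m) + ((i : ℕ) : Fin m) = i := by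
    intro i; simp [Fin.cast_val_eq_self]
  -- injectivity of q
  have hqinj : Function.Injective q := by
    rw [← LinearMap.ker_eq_bot]
    rw [LinearMap.ker_eq_bot']
    rintro ⟨v, hv⟩ h0
    have hv' : ∀ i, v (i + 1) = g i (v i) :=
      (ρ.mem_ker_blockMap_iff hβ g hg v).mp hv
    have h0' : v 0 = 0 := h0
    ext i
    have := QRep.kerA ρ g v hv' (i : ℕ) 0
    rw [h0', map_zero] at this
    calc v i = ρ.castW (hzero i) (v (0 + ((i : ℕ) : Fin m))) := ρ.apply_castW v _
      _ = 0 := by rw [this, map_zero]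
  -- range of q is ker (T - id)
  have hrange : LinearMap.range q = LinearMap.ker (ρ.monodromy g - LinearMap.id) := by
    ext x
    constructor
    · rintro ⟨⟨v, hv⟩, rfl⟩
      have hv' : ∀ i, v (i + 1) = g i (v i) :=
        (ρ.mem_ker_blockMap_iff hβ g hg v).mp hv
      have hT : ρ.monodromy g (v 0) = v 0 := by
        rw [QRep.monodromy, LinearMap.comp_apply, ← QRep.kerA ρ g v hv' m 0]
        exact (ρ.apply_castW v _).symm
      have hqv : q ⟨v, hv⟩ = v 0 := rfl
      rw [LinearMap.mem_ker, LinearMap.sub_apply, LinearMap.id_apply, hqv, hT, sub_self]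
    · intro hx
      have hT : ρ.monodromy g x = x := by
        have := hx
        simp only [LinearMap.mem_ker, LinearMap.sub_apply, LinearMap.id_apply,
          sub_eq_zero] at this
        exact this
      -- the fixed point of monodromy gives HEq between cyclicComp m and x
      have hTx : HEq (ρ.cyclicComp g m 0 x) x := by
        rw [QRep.monodromy, LinearMap.comp_apply] at hT
        exact (HEq.symm (ρ.castW_heq _ (ρ.cyclicComp g m 0 x))).trans (heq_of_eq hT)
      set v : ∀ i, ρ.W i := fun i => ρ.castW (hzero i) (ρ.cyclicComp g (i : ℕ) 0 x)
        with hv_def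
      have key : ∀ i : Fin m, v (i + 1) = g i (v i) := by
        intro i
        -- RHS is HEq to cyclicComp (i+1) 0 x
        have hR : HEq (g i (v i)) (ρ.cyclicComp g ((i : ℕ) + 1) 0 x) := by
          rw [hv_def]
          rw [ρ.g_castW g (hzero i)]
          refine (ρ.castW_heq _ _).trans ?_
          have : ρ.cyclicComp g ((i : ℕ) + 1) 0 x =
              ρ.castW (show (0 : Fin m) + ((i : ℕ) : Fin m) + 1 =
                  (0 : Fin m) + (((i : ℕ) + 1 : ℕ) : Fin m) by push_cast; rw [add_assoc])
                (g ((0 : Fin m) + ((i : ℕ) : Fin m)) (ρ.cyclicComp g (i : ℕ) 0 x)) := rfl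
          rw [this]
          exact (ρ.castW_heq _ _).symm
        have hL : HEq (v (i + 1)) (ρ.cyclicComp g ((i + 1 : Fin m) : ℕ) 0 x) :=
          ρ.castW_heq _ _
        by_cases hc : (i : ℕ) + 1 = m
        · -- wrap-around: (i+1 : Fin m) = 0
          have hi1 : ((i + 1 : Fin m) : ℕ) = 0 := by
            have him := i.isLt
            have hm1 : 1 ≤ m := Nat.one_le_iff_ne_zero.mpr (NeZero.ne m)
            have h1 : ((1 : Fin m) : ℕ) = 1 % m := Fin.val_one' m
            have hadd : ((i + 1 : Fin m) : ℕ) = ((i : ℕ) + ((1 : Fin m) : ℕ)) % m := by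
              rw [Fin.add_def]
            rw [hadd, h1]
            calc ((i : ℕ) + 1 % m) % m = ((i : ℕ) % m + 1 % m) % m := by
                  rw [Nat.mod_eq_of_lt him]
              _ = ((i : ℕ) + 1) % m := (Nat.add_mod _ _ _).symm
              _ = 0 := by rw [hc, Nat.mod_self]
          refine eq_of_heq (hL.trans ?_ |>.trans hR.symm)
          rw [hi1]
          have h0' : HEq (ρ.cyclicComp g 0 0 x) x := by
            rw [QRep.cyclicComp]; exact ρ.castW_heq _ _
          refine h0'.trans ?_
          rw [hc]
          exact hTx.symm
        · have hi1 : ((i + 1 : Fin m) : ℕ) = (i : ℕ) + 1 := by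
            have him := i.isLt
            have hm1 : 1 ≤ m := Nat.one_le_iff_ne_zero.mpr (NeZero.ne m)
            have h1 : ((1 : Fin m) : ℕ) = 1 % m := Fin.val_one' m
            have hadd : ((i + 1 : Fin m) : ℕ) = ((i : ℕ) + ((1 : Fin m) : ℕ)) % m := by
              rw [Fin.add_def]
            rw [hadd, h1]
            calc ((i : ℕ) + 1 % m) % m = ((i : ℕ) % m + 1 % m) % m := by
                  rw [Nat.mod_eq_of_lt him]
              _ = ((i : ℕ) + 1) % m := (Nat.add_mod _ _ _).symm
              _ = (i : ℕ) + 1 := Nat.mod_eq_of_lt (by omega)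
          refine eq_of_heq (hL.trans ?_ |>.trans hR.symm)
          exact ρ.cyclicComp_congr g hi1 0 x
      have hvker : v ∈ LinearMap.ker ρ.blockMap :=
        (ρ.mem_ker_blockMap_iff hβ g hg v).mpr key
      refine ⟨⟨v, hvker⟩, ?_⟩
      show v 0 = x
      refine eq_of_heq ?_
      rw [hv_def]
      refine (ρ.castW_heq _ _).trans ?_
      show HEq (ρ.cyclicComp g ((0 : Fin m) : ℕ) 0 x) x
      have : ((0 : Fin m) : ℕ) = 0 := rfl
      rw [this, QRep.cyclicComp]
      exact ρ.castW_heq _ _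
  -- kernel dimension
  have hker : finrank κ (LinearMap.ker ρ.blockMap) =
      finrank κ (LinearMap.ker (ρ.monodromy g - LinearMap.id)) := by
    rw [← hrange, ← LinearMap.finrank_range_of_inj hqinj]
  refine ⟨hker, ?_⟩
  -- cokernel dimension via rank-nullity and equality of total dimensions
  have eW : (∀ i, ρ.W i) ≃ₗ[κ] (∀ i, ρ.U i) :=
    LinearEquiv.piCongrRight fun i => LinearEquiv.ofBijective (ρ.α i) (hα i)
  have hdim : finrank κ (∀ i, ρ.W i) = finrank κ (∀ i, ρ.U i) := eW.finrank_eq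
  have h2 := LinearMap.finrank_range_add_finrank_ker ρ.blockMap
  have h3 := Submodule.finrank_quotient_add_finrank (LinearMap.range ρ.blockMap)
  omega
end

section
/- Suppose κ is algebraically closed, and let ρ be a representation of the cyclic quiver G_{2m} in which all the maps α_i and β_i are bijective. Then there exist finitely many pairs (λ_1, k_1), …, (λ_N, k_N) with λ_j ∈ κ \ {0} and k_j ≥ 1 such that ρ is isomorphic to the direct sum ρ^J(λ_1,k_1) ⊕ ⋯ ⊕ ρ^J(λ_N,k_N); the pairs (λ_j, k_j) are the Jordan cells (eigenvalue, block size) of the monodromy T. -/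
open Module
open Fin.NatCast

open Polynomial

namespace JordanAux

variable {κ : Type} [Field κ]

lemma mk_pow_eq_zero (lam : κ) (k : ℕ) {i : ℕ} (hi : k ≤ i) :
    (Submodule.Quotient.mk ((X - C lam) ^ i) :
      κ[X] ⧸ (Submodule.span κ[X] {(X - C lam) ^ k})) = 0 := by
  rw [Submodule.Quotient.mk_eq_zero, Submodule.mem_span_singleton]
  exact ⟨(X - C lam) ^ (i - k), by rw [smul_eq_mul, ← pow_add]; congr 1; omega⟩

lemma taylor_pow_sub (lam : κ) (j : ℕ) :
    taylor lam ((X - C lam) ^ j) = X ^ j := by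
  rw [taylor_apply, pow_comp, sub_comp, X_comp, C_comp, add_sub_cancel_right]

set_option maxHeartbeats 1000000 in
lemma blockEquiv (lam : κ) (k : ℕ) (hk : 1 ≤ k) :
    ∃ Ψ : (κ[X] ⧸ (Submodule.span κ[X] {(X - C lam) ^ k})) ≃ₗ[κ] (Fin k → κ),
      ∀ q, Ψ ((X : κ[X]) • q) = (jordanMatrix κ lam k).mulVec (Ψ q) := by
  set Q := κ[X] ⧸ (Submodule.span κ[X] {(X - C lam) ^ k}) with hQ
  set b : Fin k → Q := fun a => Submodule.Quotient.mk ((X - C lam) ^ (k - 1 - (a : ℕ))) with hb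
  set Φ : (Fin k → κ) →ₗ[κ] Q := Fintype.linearCombination κ b with hΦ
  have hΦ_apply : ∀ v, Φ v = ∑ a : Fin k, v a • b a := fun v => by
    simp [hΦ, Fintype.linearCombination_apply]
  have hmkpow : ∀ i : ℕ, i < k → (Submodule.Quotient.mk ((X - C lam) ^ i) : Q) ∈
      LinearMap.range Φ := by
    intro i hi
    refine ⟨Pi.single ⟨k - 1 - i, by omega⟩ 1, ?_⟩
    rw [hΦ_apply]
    rw [Finset.sum_eq_single (⟨k - 1 - i, by omega⟩ : Fin k)]
    · simp only [Pi.single_eq_same, one_smul, hb]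
      congr 2
      omega
    · intro a _ ha
      rw [Pi.single_eq_of_ne ha, zero_smul]
    · simp
  have hmksum : ∀ (s : Finset ℕ) (t : ℕ → κ),
      (Submodule.Quotient.mk (∑ i ∈ s, t i • (X - C lam) ^ i) : Q) =
        ∑ i ∈ s, t i • (Submodule.Quotient.mk ((X - C lam) ^ i) : Q) := by
    intro s t
    rw [← Submodule.mkQ_apply, map_sum]
    refine Finset.sum_congr rfl fun i _ => ?_
    rw [Submodule.mkQ_apply, Submodule.Quotient.mk_smul]
  have hsurj : Function.Surjective Φ := by
    rw [← LinearMap.range_eq_top, eq_top_iff]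
    rintro q -
    obtain ⟨P, rfl⟩ := Submodule.Quotient.mk_surjective _ q
    have hmk : (Submodule.Quotient.mk P : Q) =
        ∑ i ∈ (taylor lam P).support,
          ((taylor lam P).coeff i) • (Submodule.Quotient.mk ((X - C lam) ^ i) : Q) := by
      conv_lhs => rw [← Polynomial.sum_taylor_eq P lam]
      rw [Polynomial.sum]
      rw [show ∀ (s : Finset ℕ) (t : ℕ → κ), (∑ i ∈ s, C (t i) * (X - C lam) ^ i) =
        ∑ i ∈ s, t i • (X - C lam) ^ i from fun s t => Finset.sum_congr rfl fun i _ =>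
          (Polynomial.smul_eq_C_mul _).symm]
      exact hmksum _ _
    rw [hmk]
    refine Submodule.sum_mem _ fun i _ => Submodule.smul_mem _ _ ?_
    by_cases hi : i < k
    · exact hmkpow i hi
    · rw [mk_pow_eq_zero lam k (le_of_not_gt hi)]
      exact zero_mem _
  have hinj : Function.Injective Φ := by
    rw [← LinearMap.ker_eq_bot, LinearMap.ker_eq_bot']
    intro v hv
    set Pv : κ[X] := ∑ a : Fin k, v a • (X - C lam) ^ (k - 1 - (a : ℕ)) with hPv
    have hmkPv : (Submodule.Quotient.mk Pv : Q) = 0 := by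
      rw [← hv, hΦ_apply, hPv, ← Submodule.mkQ_apply, map_sum]
      refine Finset.sum_congr rfl fun a _ => ?_
      rw [Submodule.mkQ_apply, Submodule.Quotient.mk_smul]
    have hdvd : (X - C lam) ^ k ∣ Pv := by
      rw [Submodule.Quotient.mk_eq_zero, Submodule.mem_span_singleton] at hmkPv
      obtain ⟨c, hc⟩ := hmkPv
      exact ⟨c, by rw [← hc, smul_eq_mul, mul_comm]⟩
    have hPv0 : Pv = 0 := by
      by_contra h0
      have h1 : ((X - C lam) ^ k).natDegree ≤ Pv.natDegree :=
        Polynomial.natDegree_le_of_dvd hdvd h0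
      rw [Polynomial.natDegree_pow, Polynomial.natDegree_X_sub_C, mul_one] at h1
      have h2 : Pv.natDegree ≤ k - 1 := by
        refine Polynomial.natDegree_sum_le_of_forall_le _ _ fun a _ => ?_
        refine le_trans (Polynomial.natDegree_smul_le _ _) ?_
        rw [Polynomial.natDegree_pow, Polynomial.natDegree_X_sub_C, mul_one]
        omega
      omega
    have htay : ∑ a : Fin k, v a • (X : κ[X]) ^ (k - 1 - (a : ℕ)) = 0 := by
      have h3 := congrArg (taylor lam) hPv0
      rw [hPv, map_sum, map_zero] at h3
      rw [← h3]
      refine Finset.sum_congr rfl fun a _ => ?_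
      rw [LinearMap.map_smul, taylor_pow_sub]
    funext a0
    have h4 := congrArg (fun p => Polynomial.coeff p (k - 1 - (a0 : ℕ))) htay
    simp only [Polynomial.finset_sum_coeff, Polynomial.coeff_smul, Polynomial.coeff_X_pow,
      Polynomial.coeff_zero, smul_eq_mul] at h4
    rw [Finset.sum_eq_single a0] at h4
    · simpa using h4
    · intro a _ ha
      have hne : ¬ (k - 1 - (a0 : ℕ) = k - 1 - (a : ℕ)) := by
        have := a.isLt; have := a0.isLt
        intro h
        exact ha (Fin.ext (by omega))
      simp [hne]
    · simp
  have hcomm : ∀ (r : κ) (q : Q), (X : κ[X]) • (r • q) = r • ((X : κ[X]) • q) := by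
    intro r q
    conv_lhs => rw [← IsScalarTower.algebraMap_smul κ[X] r q, smul_smul, mul_comm, ← smul_smul]
    rw [IsScalarTower.algebraMap_smul]
  have key : ∀ v : Fin k → κ, (X : κ[X]) • Φ v = Φ ((jordanMatrix κ lam k).mulVec v) := by
    intro v
    set vv : ℕ → κ := fun i => if h : i < k then v ⟨i, h⟩ else 0 with hvv
    have hvva : ∀ a : Fin k, v a = vv a := fun a => by simp [hvv, a.isLt]
    set bb : ℕ → Q := fun i => Submodule.Quotient.mk ((X - C lam) ^ (k - 1 - i)) with hbb
    have hJv : ∀ a : Fin k, (jordanMatrix κ lam k).mulVec v a = lam * vv a + vv ((a : ℕ) + 1) := by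
      intro a
      rw [Matrix.mulVec, dotProduct]
      have hsplit : ∀ c : Fin k, jordanMatrix κ lam k a c * v c =
          (if c = a then lam * v c else 0) + (if (c : ℕ) = (a : ℕ) + 1 then v c else 0) := by
        intro c
        rw [jordanMatrix]
        by_cases h1 : c = a
        · have : ¬ ((c : ℕ) = (a : ℕ) + 1) := by subst h1; omega
          simp [h1, this]
        · by_cases h2 : (c : ℕ) = (a : ℕ) + 1 <;> simp [h1, h2]
      rw [Finset.sum_congr rfl fun c _ => hsplit c, Finset.sum_add_distrib]
      congr 1
      · rw [Finset.sum_ite_eq' Finset.univ a fun c => lam * v c]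
        simp [hvva]
      · by_cases h : (a : ℕ) + 1 < k
        · have h2 : vv ((a : ℕ) + 1) = v ⟨(a : ℕ) + 1, h⟩ := by simp [hvv, h]
          rw [h2, Finset.sum_eq_single (⟨(a : ℕ) + 1, h⟩ : Fin k)]
          · simp
          · intro c _ hc
            have : ¬ ((c : ℕ) = (a : ℕ) + 1) := fun hh => hc (Fin.ext hh)
            simp [this]
          · simp
        · have h2 : vv ((a : ℕ) + 1) = 0 := by simp [hvv, h]
          rw [h2, Finset.sum_eq_zero]
          intro c _
          have : ¬ ((c : ℕ) = (a : ℕ) + 1) := by have := c.isLt; omega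
          simp [this]
    have hXbb : ∀ i : ℕ, i < k → (X : κ[X]) • bb i = lam • bb i +
        Submodule.Quotient.mk ((X - C lam) ^ (k - i)) := by
      intro i hi
      have hpoly : (X : κ[X]) * (X - C lam) ^ (k - 1 - i) =
          lam • (X - C lam) ^ (k - 1 - i) + (X - C lam) ^ (k - i) := by
        rw [Polynomial.smul_eq_C_mul]
        rw [show k - i = (k - 1 - i) + 1 by omega, pow_succ]
        ring
      rw [hbb]
      rw [← Submodule.Quotient.mk_smul, smul_eq_mul, hpoly, Submodule.Quotient.mk_add,
        Submodule.Quotient.mk_smul]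
    rw [hΦ_apply, hΦ_apply, Finset.smul_sum]
    have lhs_eq : ∑ a : Fin k, (X : κ[X]) • (v a • b a) =
        ∑ i ∈ Finset.range k, (lam • (vv i • bb i) +
          vv i • (Submodule.Quotient.mk ((X - C lam) ^ (k - i)) : Q)) := by
      rw [← Fin.sum_univ_eq_sum_range (fun i => lam • (vv i • bb i) +
          vv i • (Submodule.Quotient.mk ((X - C lam) ^ (k - i)) : Q)) k]
      refine Finset.sum_congr rfl fun a _ => ?_
      rw [hcomm, hvva]
      have hba : b a = bb (a : ℕ) := rfl
      rw [hba, hXbb (a : ℕ) a.isLt, smul_add, smul_comm]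
    have rhs_eq : ∑ a : Fin k, (jordanMatrix κ lam k).mulVec v a • b a =
        ∑ i ∈ Finset.range k, ((lam • (vv i • bb i)) + vv (i + 1) • bb i) := by
      rw [← Fin.sum_univ_eq_sum_range (fun i => (lam • (vv i • bb i)) + vv (i + 1) • bb i) k]
      refine Finset.sum_congr rfl fun a _ => ?_
      rw [hJv a, add_smul, smul_smul]
    rw [lhs_eq, rhs_eq, Finset.sum_add_distrib, Finset.sum_add_distrib]
    congr 1
    obtain ⟨k', rfl⟩ : ∃ k', k = k' + 1 := ⟨k - 1, by omega⟩
    rw [Finset.sum_range_succ', Finset.sum_range_succ]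
    have h0 : vv 0 • (Submodule.Quotient.mk ((X - C lam) ^ (k' + 1 - 0)) : Q) = 0 := by
      rw [mk_pow_eq_zero lam (k' + 1) (by omega), smul_zero]
    have hlast : vv (k' + 1) • bb k' = 0 := by
      have h5 : vv (k' + 1) = 0 := by simp [hvv]
      rw [h5, zero_smul]
    rw [h0, hlast, add_zero, add_zero]
    refine Finset.sum_congr rfl fun i hi => ?_
    rw [show k' + 1 - (i + 1) = k' + 1 - 1 - i by omega]
  set e := LinearEquiv.ofBijective Φ ⟨hinj, hsurj⟩ with he_def
  have hsymmΦ : ∀ w, e.symm (Φ w) = w := fun w => e.symm_apply_apply w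
  refine ⟨e.symm, fun q => ?_⟩
  obtain ⟨v, rfl⟩ : ∃ v, Φ v = q := hsurj q
  rw [key, hsymmΦ, hsymmΦ]



/-- drop subsingleton components of a Pi type -/
def restrictPiEquiv {ι : Type} (P : ι → Prop) [DecidablePred P]
    (F : ι → Type) [∀ i, AddCommMonoid (F i)] [∀ i, Module κ (F i)]
    (hsub : ∀ i, ¬ P i → Subsingleton (F i)) :
    (∀ i, F i) ≃ₗ[κ] (∀ i : {i // P i}, F i) where
  toFun f i := f i
  invFun g i := if h : P i then g ⟨i, h⟩ else 0
  map_add' _ _ := rfl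
  map_smul' _ _ := rfl
  left_inv f := by
    funext i
    by_cases h : P i
    · simp [h]
    · haveI := hsub i h
      exact Subsingleton.elim _ _
  right_inv g := by
    funext i
    show (if h : P i.1 then g ⟨i.1, h⟩ else 0) = g i
    rw [dif_pos i.2]

lemma assoc_linear [IsAlgClosed κ] {p : κ[X]} (hp : Irreducible p) :
    ∃ μ : κ, Associated p (X - C μ) := by
  have hd := IsAlgClosed.degree_eq_one_of_irreducible κ hp
  have hc : p.coeff 1 ≠ 0 := Polynomial.coeff_ne_zero_of_eq_degree (by exact_mod_cast hd)
  refine ⟨-(p.coeff 0) / p.coeff 1, ?_⟩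
  have hpeq : p = C (p.coeff 1) * (X - C (-(p.coeff 0) / p.coeff 1)) := by
    conv_lhs => rw [Polynomial.eq_X_add_C_of_degree_le_one hd.le]
    rw [mul_sub, ← C_mul, mul_comm (p.coeff 1), div_mul_cancel₀ _ hc, map_neg, sub_neg_eq_add]
  have h2 : Associated ((X - C (-(p.coeff 0) / p.coeff 1)) * C (p.coeff 1))
      (X - C (-(p.coeff 0) / p.coeff 1)) :=
    associated_mul_unit_left _ _ (Polynomial.isUnit_C.mpr (IsUnit.mk0 _ hc))
  rw [mul_comm, ← hpeq] at h2
  exact h2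

theorem exists_jordan_form [IsAlgClosed κ]
    {V : Type} [AddCommGroup V] [Module κ V] [FiniteDimensional κ V] (T : V →ₗ[κ] V) :
    ∃ (N : ℕ) (lam : Fin N → κ) (k : Fin N → ℕ), (∀ j, 1 ≤ k j) ∧
      ∃ u : V ≃ₗ[κ] ∀ j, Fin (k j) → κ,
        ∀ x j, u (T x) j = (jordanMatrix κ (lam j) (k j)).mulVec (u x j) := by
  classical
  have htor : Module.IsTorsion κ[X] (Module.AEval' T) :=
    Module.AEval.isTorsion_of_finiteDimensional κ V T
  obtain ⟨ι, hfin, p, hirr, eexp, ⟨g⟩⟩ := Module.equiv_directSum_of_isTorsion htor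
  haveI := hfin
  -- choose the roots
  have hμ : ∀ i, ∃ μ : κ, Associated (p i) (X - C μ) := fun i => assoc_linear (hirr i)
  choose μ hμassoc using hμ
  have hspan : ∀ i, Submodule.span κ[X] {p i ^ eexp i} =
      Submodule.span κ[X] {(X - C (μ i)) ^ eexp i} := by
    intro i
    rw [Ideal.submodule_span_eq, Ideal.submodule_span_eq,
      Ideal.span_singleton_eq_span_singleton]
    exact (hμassoc i).pow_pow
  set Q : ι → Type := fun i => κ[X] ⧸ (Submodule.span κ[X] {(X - C (μ i)) ^ eexp i}) with hQdef
  -- componentwise transport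
  let g2 : Module.AEval' T ≃ₗ[κ[X]] Π₀ i, Q i :=
    g.trans (DFinsupp.mapRange.linearEquiv fun i => Submodule.quotEquivOfEq _ _ (hspan i))
  let w1 : V ≃ₗ[κ] Π₀ i, Q i :=
    (Module.AEval'.of T).trans (g2.restrictScalars κ)
  have hw1 : ∀ x : V, w1 (T x) = (X : κ[X]) • w1 x := by
    intro x
    have h1 : w1 (T x) = g2 (Module.AEval'.of T (T x)) := rfl
    have h2 : (Module.AEval'.of T) (T x) = (X : κ[X]) • (Module.AEval'.of T x) :=
      (Module.AEval'.X_smul_of T x).symm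
    rw [h1, h2, map_smul]
    rfl
  let w2 : V ≃ₗ[κ] ∀ i, Q i := w1.trans (DirectSum.linearEquivFunOnFintype κ ι Q)
  have hw2 : ∀ (x : V) (i : ι), w2 (T x) i = (X : κ[X]) • (w2 x i) := by
    intro x i
    have h1 : ∀ (q : Π₀ i, Q i), DirectSum.linearEquivFunOnFintype κ ι Q q i = q i :=
      fun q => rfl
    have h2 : w2 (T x) i = w1 (T x) i := rfl
    rw [h2, hw1 x]
    exact DirectSum.smul_apply _ _ i
  -- drop trivial components
  set P : ι → Prop := fun i => eexp i ≠ 0 with hPdef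
  have hsub : ∀ i, ¬ P i → Subsingleton (Q i) := by
    intro i hi
    have hi0 : eexp i = 0 := not_not.mp hi
    rw [Submodule.Quotient.subsingleton_iff, hi0, pow_zero, eq_top_iff]
    intro q _
    rw [Submodule.mem_span_singleton]
    exact ⟨q, by simp⟩
  let w3 : V ≃ₗ[κ] ∀ i : {i // P i}, Q i := w2.trans (restrictPiEquiv P Q hsub)
  have hw3 : ∀ (x : V) (i : {i // P i}), w3 x i = w2 x i := fun x i => rfl
  -- blocks
  have hΨ := fun i : {i // P i} =>
    blockEquiv (μ i.1) (eexp i.1) (Nat.one_le_iff_ne_zero.mpr i.2)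
  choose Ψ hΨspec using hΨ
  let w4 : V ≃ₗ[κ] ∀ i : {i // P i}, Fin (eexp i.1) → κ :=
    w3.trans (LinearEquiv.piCongrRight Ψ)
  have hw4 : ∀ (x : V) (i : {i // P i}),
      w4 (T x) i = (jordanMatrix κ (μ i.1) (eexp i.1)).mulVec (w4 x i) := by
    intro x i
    have h1 : ∀ (y : V), w4 y i = Ψ i (w3 y i) := fun y => rfl
    rw [h1, h1, hw3, hw3, hw2, hΨspec]
  -- reindex
  set N := Fintype.card {i // P i} with hN
  set eqv : Fin N ≃ {i // P i} := (Fintype.equivFin {i // P i}).symm with heqv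
  refine ⟨N, fun j => μ (eqv j).1, fun j => eexp (eqv j).1,
    fun j => Nat.one_le_iff_ne_zero.mpr (eqv j).2, ?_⟩
  let F : {i // P i} → Type := fun i => Fin (eexp i.1) → κ
  let u : V ≃ₗ[κ] ∀ j : Fin N, F (eqv j) :=
    w4.trans (LinearEquiv.piCongrLeft κ F eqv).symm
  refine ⟨u, fun x j => ?_⟩
  have hu : ∀ (y : V), u y j = w4 y (eqv j) := fun y => rfl
  rw [hu, hu, hw4]


end JordanAux

namespace QRep

variable {κ : Type} [Field κ] {m : ℕ} [NeZero m] (ρ : QRep κ m)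
  (e : ∀ i, ρ.W i ≃ₗ[κ] ρ.W (i + 1))

lemma castWE_rfl {a : Fin m} (x : ρ.W a) : ρ.castWE rfl x = x := rfl

lemma castWE_castWE {a b c : Fin m} (h1 : a = b) (h2 : b = c) (x : ρ.W a) :
    ρ.castWE h2 (ρ.castWE h1 x) = ρ.castWE (h1.trans h2) x := by
  subst h1; subst h2; rfl

lemma e_castWE {a b : Fin m} (h : a = b) (x : ρ.W a) :
    e b (ρ.castWE h x) = ρ.castWE (show a + 1 = b + 1 by rw [h]) (e a x) := by
  subst h; rfl

lemma cyclicCompE_congr {n n' : ℕ} (h : n = n') (i : Fin m) (x : ρ.W i) :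
    ρ.cyclicCompE e n' i x =
      ρ.castWE (show i + (n : Fin m) = i + (n' : Fin m) by rw [h]) (ρ.cyclicCompE e n i x) := by
  subst h; rfl

lemma cyclicCompE_succ (n : ℕ) (i : Fin m) (x : ρ.W i) :
    ρ.cyclicCompE e (n + 1) i x =
      ρ.castWE (show i + (n : Fin m) + 1 = i + ((n + 1 : ℕ) : Fin m) by push_cast; rw [add_assoc])
        (e (i + (n : Fin m)) (ρ.cyclicCompE e n i x)) := rfl

lemma Ci_apply (i : Fin m) (x : ρ.W 0) :
    ρ.Ci e i x =
      ρ.castWE (show (0 : Fin m) + ((i : ℕ) : Fin m) = i by simp [Fin.cast_val_eq_self])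
        (ρ.cyclicCompE e (i : ℕ) 0 x) := rfl

lemma Ti_apply (i : Fin m) (x : ρ.W i) :
    ρ.Ti e i x =
      ρ.castWE (show i + (m : Fin m) = i by simp [Fin.natCast_self])
        (ρ.cyclicCompE e m i x) := rfl

lemma Ci_zero (x : ρ.W 0) : ρ.Ci e 0 x = x := by
  rw [Ci_apply, cyclicCompE_congr ρ e (show (0 : ℕ) = ((0 : Fin m) : ℕ) by simp) 0 x]
  show ρ.castWE _ (ρ.castWE _ (ρ.castWE _ x)) = x
  rw [castWE_castWE, castWE_castWE]
  exact castWE_rfl ρ x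

lemma wrap_val (i : Fin m) (h : i + 1 = 0) : (i : ℕ) + 1 = m := by
  obtain ⟨n, rfl⟩ := Nat.exists_eq_succ_of_ne_zero (NeZero.ne m)
  have hv := Fin.val_add_one i
  by_cases hl : i = Fin.last n
  · rw [hl, Fin.val_last]
  · rw [if_neg hl] at hv
    rw [h] at hv
    simp at hv

lemma nowrap_val (i : Fin m) (h : ¬ (i + 1 = 0)) : ((i + 1 : Fin m) : ℕ) = (i : ℕ) + 1 := by
  obtain ⟨n, rfl⟩ := Nat.exists_eq_succ_of_ne_zero (NeZero.ne m)
  have hv := Fin.val_add_one i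
  by_cases hl : i = Fin.last n
  · exfalso
    exact h (by rw [hl, Fin.last_add_one])
  · rw [if_neg hl] at hv
    exact hv

lemma Ci_succ (i : Fin m) (h : ¬ (i + 1 = 0)) (z : ρ.W 0) :
    ρ.Ci e (i + 1) z = e i (ρ.Ci e i z) := by
  have hval : ((i : ℕ) + 1) = ((i + 1 : Fin m) : ℕ) := (nowrap_val i h).symm
  rw [Ci_apply, cyclicCompE_congr ρ e hval 0 z, cyclicCompE_succ, Ci_apply, e_castWE,
    castWE_castWE, castWE_castWE]

lemma Ci_wrap (i : Fin m) (h : i + 1 = 0) (z : ρ.W 0) :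
    ρ.castWE h (e i (ρ.Ci e i z)) = ρ.Ti e 0 z := by
  have hval : ((i : ℕ) + 1) = m := wrap_val i h
  rw [Ti_apply, cyclicCompE_congr ρ e hval 0 z, cyclicCompE_succ, Ci_apply, e_castWE,
    castWE_castWE, castWE_castWE, castWE_castWE]

end QRep


/-- Over an algebraically closed field, a representation of `G_{2m}` with all
maps `α_i`, `β_i` bijective decomposes as a finite direct sum of Jordan-cell representations
`ρ^J(λ_j,k_j)` with `λ_j ≠ 0`, `k_j ≥ 1`; the pairs `(λ_j,k_j)` are the Jordan cells
(eigenvalue, block size) of the monodromy `T`. -/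
theorem jordan_decomposition_of_bijective {κ : Type} [Field κ] [IsAlgClosed κ]
    {m : ℕ} [NeZero m] (ρ : QRep κ m)
    (hα : ∀ i, Function.Bijective (ρ.α i)) (hβ : ∀ i, Function.Bijective (ρ.β i))
    (e : ∀ i, ρ.W i ≃ₗ[κ] ρ.W (i + 1)) (he : ∀ i x, ρ.β i (e i x) = ρ.α i x) :
    ∃ (N : ℕ) (lam : Fin N → κ) (k : Fin N → ℕ),
      (∀ j, lam j ≠ 0) ∧ (∀ j, 1 ≤ k j) ∧
      ρ.IsIsomorphic (QRep.dsumFin fun j => jordanRep κ m (lam j) (k j)) ∧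
      ∃ u : ρ.W 0 ≃ₗ[κ] ∀ j, Fin (k j) → κ,
        ∀ x j, u (ρ.Ti e 0 x) j = (jordanMatrix κ (lam j) (k j)).mulVec (u x j) := by
  classical
  obtain ⟨N, lam, k, hk1, u, hu⟩ :=
    JordanAux.exists_jordan_form (κ := κ) (V := ρ.W 0) (ρ.Ti e 0 : ρ.W 0 →ₗ[κ] ρ.W 0)
  have hu' : ∀ (x : ρ.W 0) (j : Fin N),
      u (ρ.Ti e 0 x) j = (jordanMatrix κ (lam j) (k j)).mulVec (u x j) := fun x j => hu x j
  -- the blockwise Jordan map is bijective, hence all eigenvalues are nonzero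
  have hB : Function.Bijective (fun v : (∀ j, Fin (k j) → κ) =>
      (fun j => (jordanMatrix κ (lam j) (k j)).mulVec (v j) : ∀ j, Fin (k j) → κ)) := by
    have heq : (fun v : (∀ j, Fin (k j) → κ) =>
        (fun j => (jordanMatrix κ (lam j) (k j)).mulVec (v j) : ∀ j, Fin (k j) → κ))
        = fun v => u (ρ.Ti e 0 (u.symm v)) := by
      funext v j
      rw [hu' (u.symm v) j, LinearEquiv.apply_symm_apply]
    rw [heq]
    exact u.bijective.comp ((ρ.Ti e 0).bijective.comp u.symm.bijective)
  have hlam : ∀ j, lam j ≠ 0 := by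
    intro j hl
    have hk := hk1 j
    set w0 : Fin (k j) → κ := Pi.single ⟨0, hk⟩ 1 with hw0
    have hJw0 : (jordanMatrix κ (lam j) (k j)).mulVec w0 = 0 := by
      rw [hw0, Matrix.mulVec_single]
      funext a
      show jordanMatrix κ (lam j) (k j) a ⟨0, hk⟩ * 1 = 0
      rw [jordanMatrix, Matrix.of_apply]
      by_cases h1 : (⟨0, hk⟩ : Fin (k j)) = a
      · rw [if_pos h1, hl, zero_mul]
      · have h2 : ¬ (((⟨0, hk⟩ : Fin (k j)) : ℕ) = (a : ℕ) + 1) := by simp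
        rw [if_neg h1, if_neg h2, zero_mul]
    set v0 : ∀ j', Fin (k j') → κ := Pi.single j w0 with hv0
    have hBv0 : (fun j' => (jordanMatrix κ (lam j') (k j')).mulVec (v0 j')) =
        (fun j' => (jordanMatrix κ (lam j') (k j')).mulVec ((0 : ∀ j', Fin (k j') → κ) j')) := by
      funext j'
      by_cases hj : j' = j
      · subst hj
        rw [hv0, Pi.single_eq_same, hJw0]
        simp
      · rw [hv0, Pi.single_eq_of_ne hj]
        simp
    have := hB.injective hBv0
    have h3 : w0 = 0 := by
      have h4 := congrFun this j
      rwa [hv0, Pi.single_eq_same] at h4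
    have h5 := congrFun h3 ⟨0, hk⟩
    rw [hw0, Pi.single_eq_same] at h5
    exact one_ne_zero h5
  -- invertible Jordan blocks
  have hinvJ : ∀ j, ∃ (E : (Fin (k j) → κ) ≃ₗ[κ] (Fin (k j) → κ)),
      ∀ v, E v = (jordanMatrix κ (lam j) (k j)).mulVec v := by
    intro j
    have hdet : IsUnit (jordanMatrix κ (lam j) (k j)).det := by
      have htri : (jordanMatrix κ (lam j) (k j)).BlockTriangular id := by
        intro a b hab
        show (if b = a then lam j else if (b : ℕ) = (a : ℕ) + 1 then (1 : κ) else 0) = 0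
        have hba : (b : ℕ) < (a : ℕ) := hab
        have h1 : ¬ (b = a) := by
          intro h
          rw [h] at hba
          exact lt_irrefl _ hba
        have h2 : ¬ ((b : ℕ) = (a : ℕ) + 1) := by omega
        rw [if_neg h1, if_neg h2]
      rw [Matrix.det_of_upperTriangular htri]
      have : ∀ a : Fin (k j), jordanMatrix κ (lam j) (k j) a a = lam j := by
        intro a
        show (if a = a then lam j else _) = lam j
        rw [if_pos rfl]
      rw [Finset.prod_congr rfl fun a _ => this a, Finset.prod_const]
      exact (IsUnit.mk0 _ (hlam j)).pow _
    refine ⟨LinearEquiv.ofLinear (jordanMatrix κ (lam j) (k j)).mulVecLin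
      ((jordanMatrix κ (lam j) (k j))⁻¹).mulVecLin ?_ ?_, fun v => rfl⟩
    · rw [← Matrix.mulVecLin_mul, Matrix.mul_nonsing_inv _ hdet, Matrix.mulVecLin_one]
    · rw [← Matrix.mulVecLin_mul, Matrix.nonsing_inv_mul _ hdet, Matrix.mulVecLin_one]
  choose Jeq hJeq using hinvJ
  set Jm : (∀ j, Fin (k j) → κ) ≃ₗ[κ] (∀ j, Fin (k j) → κ) :=
    LinearEquiv.piCongrRight Jeq with hJmdef
  have hJm : ∀ v j, Jm v j = (jordanMatrix κ (lam j) (k j)).mulVec (v j) := by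
    intro v j
    rw [hJmdef]
    show Jeq j (v j) = _
    exact hJeq j (v j)
  set Km : Fin m → ((∀ j, Fin (k j) → κ) ≃ₗ[κ] (∀ j, Fin (k j) → κ)) :=
    fun i => if i = 0 then LinearEquiv.refl κ _ else Jm with hKmdef
  have hKm0 : ∀ v, Km 0 v = v := by
    intro v
    show (if (0 : Fin m) = 0 then LinearEquiv.refl κ (∀ j, Fin (k j) → κ) else Jm) v = v
    rw [if_pos rfl]
    rfl
  have hKmne : ∀ i, i ≠ 0 → ∀ v, Km i v = Jm v := by
    intro i hi v
    show (if i = 0 then LinearEquiv.refl κ (∀ j, Fin (k j) → κ) else Jm) v = Jm v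
    rw [if_neg hi]
  set φW : ∀ i, ρ.W i ≃ₗ[κ] (∀ j, Fin (k j) → κ) :=
    fun i => ((ρ.Ci e i).symm.trans u).trans (Km i) with hφWdef
  set βE : ∀ i, ρ.W (i + 1) ≃ₗ[κ] ρ.U i :=
    fun i => LinearEquiv.ofBijective (ρ.β i) (hβ i) with hβEdef
  set φU : ∀ i, ρ.U i ≃ₗ[κ] (∀ j, Fin (k j) → κ) :=
    fun i => (βE i).symm.trans (φW (i + 1)) with hφUdef
  have hφWap : ∀ (i : Fin m) (y : ρ.W i), φW i y = Km i (u ((ρ.Ci e i).symm y)) :=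
    fun i y => rfl
  have hφWcast : ∀ {a b : Fin m} (h : a = b) (y : ρ.W a), φW b (ρ.castWE h y) = φW a y := by
    intro a b h y
    subst h
    rfl
  have hβEsym : ∀ (i : Fin m) (x : ρ.W i), (βE i).symm (ρ.α i x) = e i x := by
    intro i x
    rw [LinearEquiv.symm_apply_eq]
    exact (he i x).symm
  -- the key computation
  have hcore : ∀ (i : Fin m) (z : ρ.W 0), φW (i + 1) (e i (ρ.Ci e i z)) = Jm (u z) := by
    intro i z
    by_cases h : i + 1 = 0
    · rw [← hφWcast h (e i (ρ.Ci e i z)), QRep.Ci_wrap ρ e i h z, hφWap, hKm0]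
      have h3 : (ρ.Ci e 0).symm (ρ.Ti e 0 z) = ρ.Ti e 0 z := by
        rw [LinearEquiv.symm_apply_eq, QRep.Ci_zero]
      rw [h3]
      funext j
      rw [hJm]
      exact hu' z j
    · rw [← QRep.Ci_succ ρ e i h z, hφWap, LinearEquiv.symm_apply_apply, hKmne _ h]
  set σ := QRep.dsumFin fun j => jordanRep κ m (lam j) (k j) with hσdef
  have commα : ∀ (i : Fin m) (x : ρ.W i), φU i (ρ.α i x) = σ.α i (φW i x) := by
    intro i x
    have h5 : φU i (ρ.α i x) = φW (i + 1) (e i x) := by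
      show φW (i + 1) ((βE i).symm (ρ.α i x)) = _
      rw [hβEsym]
    set z := (ρ.Ci e i).symm x with hz
    have hx : x = ρ.Ci e i z := (LinearEquiv.apply_symm_apply _ x).symm
    rw [h5, hx, hcore, hφWap, hz]
    rw [show (ρ.Ci e i).symm (ρ.Ci e i ((ρ.Ci e i).symm x)) = (ρ.Ci e i).symm x from
      LinearEquiv.symm_apply_apply _ _]
    by_cases h0 : i = 0
    · subst h0
      rw [hKm0]
      funext j
      rw [hJm]
      show _ = (if (0 : Fin m) = 0 then (jordanMatrix κ (lam j) (k j)).mulVecLin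
        else LinearMap.id) ((u ((ρ.Ci e 0).symm x)) j)
      rw [if_pos rfl]
      rfl
    · rw [hKmne i h0]
      funext j
      show Jm (u ((ρ.Ci e i).symm x)) j = (if i = 0 then (jordanMatrix κ (lam j) (k j)).mulVecLin
        else LinearMap.id) (Jm (u ((ρ.Ci e i).symm x)) j)
      rw [if_neg h0]
      rfl
  have commβ : ∀ (i : Fin m) (x : ρ.W (i + 1)), φU i (ρ.β i x) = σ.β i (φW (i + 1) x) := by
    intro i x
    have h6 : φU i (ρ.β i x) = φW (i + 1) x := by
      show φW (i + 1) ((βE i).symm (ρ.β i x)) = _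
      congr 1
      rw [LinearEquiv.symm_apply_eq]
      rfl
    rw [h6]
    rfl
  exact ⟨N, lam, k, hlam, hk1, ⟨⟨φW, φU, commα, commβ⟩⟩, u, hu'⟩
end
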